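/- arXiv:2002.10544 — 2 statements merged into one kernel-verified Lean document; each statement's English description precedes it below -/
import Mathlib

section
/- For all positive integers n, d, K and every nonzero y = (y_1,…,y_n) ∈ (ℝ^d)^n, E_γ[ sup_{W∈ℝ^{K×d}, ‖W‖_F≤1} Σ_{i=1}^n Σ_{j=1}^K γ_{ij} ⟨W_j, y_i⟩ ] ≤ √K · ‖y‖, where the γ_{ij} are i.i.d. standard normal random variables, W_j denotes the j-th row of W, ‖W‖_F is the Frobenius norm, and ‖y‖ = (Σ_{i=1}^n ‖y_i‖₂²)^{1/2}. -/
noncomputable section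

open MeasureTheory ProbabilityTheory

open Real
open scoped ENNReal NNReal


lemma gauss_meas : Measurable fun x => (gaussianPDFReal 0 1 x).toNNReal :=
  (measurable_gaussianPDFReal 0 1).real_toNNReal

lemma gauss_wd : gaussianReal 0 1 =
    volume.withDensity (fun x => ((gaussianPDFReal 0 1 x).toNNReal : ℝ≥0∞)) := by
  rw [gaussianReal_of_var_ne_zero 0 one_ne_zero]
  rfl

lemma gauss_integral_eq (g : ℝ → ℝ) :
    ∫ x, g x ∂(gaussianReal 0 1) = ∫ x, gaussianPDFReal 0 1 x * g x := by
  rw [gauss_wd, integral_withDensity_eq_integral_smul gauss_meas]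
  congr 1; ext x
  rw [NNReal.smul_def, smul_eq_mul, Real.coe_toNNReal _ (gaussianPDFReal_nonneg 0 1 x)]

lemma gauss_pdf_eq (x : ℝ) :
    gaussianPDFReal 0 1 x = (Real.sqrt (2 * π))⁻¹ * rexp (-x ^ 2 / 2) := by
  simp [gaussianPDFReal]

lemma gauss_integrable_sq : Integrable (fun x : ℝ => x ^ 2) (gaussianReal 0 1) := by
  rw [gauss_wd, integrable_withDensity_iff_integrable_smul gauss_meas]
  have h := (integrable_rpow_mul_exp_neg_mul_sq (by norm_num : (0:ℝ) < 1/2)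
    (by norm_num : (-1:ℝ) < 2)).const_mul ((Real.sqrt (2 * π))⁻¹)
  refine h.congr (Filter.Eventually.of_forall fun x => ?_)
  simp only [NNReal.smul_def, smul_eq_mul]
  rw [Real.coe_toNNReal _ (gaussianPDFReal_nonneg 0 1 x), gauss_pdf_eq,
    show x ^ (2:ℝ) = x ^ (2:ℕ) from by rw [← Real.rpow_natCast x 2]; norm_num,
    show (-x ^ 2 / 2 : ℝ) = -(1/2) * x ^ 2 from by ring]
  ring

lemma gauss_integrable_id : Integrable (fun x : ℝ => x) (gaussianReal 0 1) := by
  rw [gauss_wd, integrable_withDensity_iff_integrable_smul gauss_meas]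
  have h := (integrable_rpow_mul_exp_neg_mul_sq (by norm_num : (0:ℝ) < 1/2)
    (by norm_num : (-1:ℝ) < 1)).const_mul ((Real.sqrt (2 * π))⁻¹)
  refine h.congr (Filter.Eventually.of_forall fun x => ?_)
  simp only [NNReal.smul_def, smul_eq_mul]
  rw [Real.coe_toNNReal _ (gaussianPDFReal_nonneg 0 1 x), gauss_pdf_eq, Real.rpow_one,
    show (-x ^ 2 / 2 : ℝ) = -(1/2) * x ^ 2 from by ring]
  ring

lemma gauss_integral_id : ∫ x, x ∂(gaussianReal 0 1) = 0 := by
  rw [gauss_integral_eq]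
  have h1 : ∀ x : ℝ, gaussianPDFReal 0 1 (-x) * (-x) = -(gaussianPDFReal 0 1 x * x) := by
    intro x
    rw [gauss_pdf_eq, gauss_pdf_eq, show (-(-x) ^ 2 / 2 : ℝ) = -x ^ 2 / 2 from by ring]
    ring
  have key : (∫ x : ℝ, gaussianPDFReal 0 1 x * x)
      = - ∫ x : ℝ, gaussianPDFReal 0 1 x * x := by
    calc (∫ x : ℝ, gaussianPDFReal 0 1 x * x)
        = ∫ x : ℝ, gaussianPDFReal 0 1 (-x) * (-x) :=
          (integral_neg_eq_self (fun x : ℝ => gaussianPDFReal 0 1 x * x) volume).symm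
      _ = ∫ x : ℝ, -(gaussianPDFReal 0 1 x * x) := by simp only [h1]
      _ = - ∫ x : ℝ, gaussianPDFReal 0 1 x * x := integral_neg _
  linarith

lemma integral_sq_exp : ∫ x : ℝ, x ^ 2 * rexp (-x ^ 2 / 2) = Real.sqrt (2 * π) := by
  have h := integral_comp_abs (f := fun u : ℝ => u ^ 2 * rexp (-u ^ 2 / 2))
  simp only [sq_abs] at h
  rw [h, setIntegral_congr_fun measurableSet_Ioi
    (fun x _ => by
      rw [show x ^ (2:ℝ) = x ^ (2:ℕ) from by rw [← Real.rpow_natCast x 2]; norm_num,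
        show (-(1/2) * x ^ 2 : ℝ) = -x ^ 2 / 2 from by ring] :
      ∀ x ∈ Set.Ioi (0:ℝ), x ^ 2 * rexp (-x ^ 2 / 2)
        = x ^ (2:ℝ) * rexp (-(1/2) * x ^ (2:ℝ))),
    integral_rpow_mul_exp_neg_mul_rpow (by norm_num) (by norm_num) (by norm_num)]
  rw [show (-((2:ℝ) + 1) / 2) = -(3/2) by norm_num,
    Real.rpow_neg (by norm_num), show ((1:ℝ)/2) = 2⁻¹ by norm_num,
    Real.inv_rpow (by norm_num), inv_inv,
    show ((3:ℝ)/2) = 1 + 1/2 by norm_num, Real.rpow_add (by norm_num), Real.rpow_one,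
    ← Real.sqrt_eq_rpow,
    show ((2:ℝ) + 1) / 2 = 1/2 + 1 by norm_num,
    Real.Gamma_add_one (by norm_num), Real.Gamma_one_half_eq,
    Real.sqrt_mul (by norm_num)]
  ring

lemma gauss_integral_sq : ∫ x, x ^ 2 ∂(gaussianReal 0 1) = 1 := by
  rw [gauss_integral_eq]
  have h : ∀ x : ℝ, gaussianPDFReal 0 1 x * x ^ 2
      = (Real.sqrt (2 * π))⁻¹ * (x ^ 2 * rexp (-x ^ 2 / 2)) := by
    intro x; rw [gauss_pdf_eq]; ring
  simp only [h]
  rw [integral_const_mul, integral_sq_exp, inv_mul_cancel₀]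
  positivity
section Bpart
variable {ι : Type*} [Fintype ι] [DecidableEq ι]

lemma pi_integral_prod (μ : Measure ℝ) [SigmaFinite μ] (f : ι → ℝ → ℝ) :
    ∫ x : ι → ℝ, ∏ i, f i (x i) ∂(Measure.pi fun _ => μ) = ∏ i, ∫ x, f i x ∂μ := by
  letI : MeasureSpace ℝ := ⟨μ⟩
  exact MeasureTheory.integral_fintype_prod_eq_prod f

lemma pi_integrable_prod (μ : Measure ℝ) [SigmaFinite μ] (f : ι → ℝ → ℝ)
    (hf : ∀ i, Integrable (f i) μ) :
    Integrable (fun x : ι → ℝ => ∏ i, f i (x i)) (Measure.pi fun _ => μ) := by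
  letI : MeasureSpace ℝ := ⟨μ⟩
  exact MeasureTheory.Integrable.fintype_prod (E := ℝ) (f := f) hf

/-- auxiliary coordinate functions -/
def evf (a b : ι) (c : ι) : ℝ → ℝ :=
  if c = a then (if a = b then fun x => x ^ 2 else fun x => x)
  else if c = b then fun x => x else fun _ => 1

lemma evf_prod (a b : ι) (γ : ι → ℝ) : ∏ c, evf a b c (γ c) = γ a * γ b := by
  by_cases hab : a = b
  · subst hab
    rw [Finset.prod_eq_single_of_mem a (Finset.mem_univ a)
      (fun c _ hc => by simp [evf, hc])]
    simp [evf]; ring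
  · rw [← Finset.mul_prod_erase Finset.univ _ (Finset.mem_univ a),
      ← Finset.mul_prod_erase _ _
        (Finset.mem_erase.2 ⟨fun h => hab h.symm, Finset.mem_univ b⟩)]
    have h1 : evf a b a (γ a) = γ a := by simp [evf, hab]
    have hba : ¬ b = a := fun h => hab h.symm
    have h2 : evf a b b (γ b) = γ b := by simp [evf, hba, hab]
    have h3 : ∏ c ∈ (Finset.univ.erase a).erase b, evf a b c (γ c) = 1 := by
      refine Finset.prod_eq_one fun c hc => ?_
      have hcb : c ≠ b := Finset.ne_of_mem_erase hc
      have hca : c ≠ a := Finset.ne_of_mem_erase (Finset.mem_of_mem_erase hc)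
      simp [evf, hca, hcb]
    rw [h1, h2, h3]
    ring

lemma evf_integrable (a b c : ι) : Integrable (evf a b c) (gaussianReal 0 1) := by
  unfold evf
  split_ifs
  exacts [gauss_integrable_sq, gauss_integrable_id, gauss_integrable_id,
    integrable_const 1]

lemma pi_integrable_eval_mul (a b : ι) :
    Integrable (fun γ : ι → ℝ => γ a * γ b)
      (Measure.pi fun _ : ι => gaussianReal 0 1) :=
  (pi_integrable_prod _ (evf a b) (evf_integrable a b)).congr
    (Filter.Eventually.of_forall fun γ => evf_prod a b γ)

lemma pi_integral_eval_mul (a b : ι) :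
    ∫ γ : ι → ℝ, γ a * γ b ∂(Measure.pi fun _ : ι => gaussianReal 0 1)
      = if a = b then 1 else 0 := by
  rw [integral_congr_ae (Filter.Eventually.of_forall fun γ => (evf_prod a b γ).symm),
    pi_integral_prod]
  by_cases hab : a = b
  · subst hab
    rw [if_pos rfl, Finset.prod_eq_single_of_mem a (Finset.mem_univ a)
      (fun c _ hc => by simp [evf, hc])]
    simp only [evf, if_pos rfl]
    exact gauss_integral_sq
  · rw [if_neg hab]
    refine Finset.prod_eq_zero (Finset.mem_univ a) ?_
    have : evf a b a = fun x : ℝ => x := by simp [evf, hab]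
    rw [this]
    exact gauss_integral_id

end Bpart

/-- Frobenius norm of a `K × d` real matrix. -/
def frob {K d : ℕ} (W : Matrix (Fin K) (Fin d) ℝ) : ℝ :=
  Real.sqrt (∑ i, ∑ j, (W i j) ^ 2)

/-- For all positive `n, d, K` and every nonzero `y ∈ (ℝ^d)^n`,
`E_γ[sup_{‖W‖_F≤1} ∑_{i,j} γ_{ij} ⟨W_j, y_i⟩] ≤ √K · ‖y‖`, where the `γ_{ij}` are i.i.d.
standard normal, `W_j` is the `j`-th row of `W` and `‖y‖ = (∑_i ‖y_i‖²)^{1/2}`. -/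
theorem stmt_4 (n d K : ℕ) (hn : 0 < n) (hd : 0 < d) (hK : 0 < K)
    (y : Fin n → EuclideanSpace ℝ (Fin d)) (hy : y ≠ 0) :
    (∫ γ : Fin n × Fin K → ℝ,
        (⨆ W : {W : Matrix (Fin K) (Fin d) ℝ // frob W ≤ 1},
          ∑ i : Fin n, ∑ j : Fin K, γ (i, j) * ∑ k : Fin d, W.1 j k * y i k)
        ∂(Measure.pi fun _ => gaussianReal 0 1))
      ≤ Real.sqrt K * Real.sqrt (∑ i, ‖y i‖ ^ 2) := by
  classical
  set P : Measure (Fin n × Fin K → ℝ) := Measure.pi fun _ => gaussianReal 0 1 with hP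
  have : IsProbabilityMeasure P := by rw [hP]; infer_instance
  set A : (Fin n × Fin K → ℝ) → Fin K → Fin d → ℝ :=
    fun γ j k => ∑ i, γ (i, j) * y i k with hA
  set q : (Fin n × Fin K → ℝ) → ℝ := fun γ => ∑ j, ∑ k, (A γ j k) ^ 2 with hq
  set g : (Fin n × Fin K → ℝ) → ℝ := fun γ => Real.sqrt (q γ) with hg
  have hq0 : ∀ γ, 0 ≤ q γ := fun γ =>
    Finset.sum_nonneg fun j _ => Finset.sum_nonneg fun k _ => sq_nonneg _
  have hg0 : ∀ γ, 0 ≤ g γ := fun γ => Real.sqrt_nonneg _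
  -- pointwise bound for each admissible W
  have key : ∀ (γ : Fin n × Fin K → ℝ) (W : Matrix (Fin K) (Fin d) ℝ), frob W ≤ 1 →
      ∑ i : Fin n, ∑ j : Fin K, γ (i, j) * ∑ k : Fin d, W j k * y i k ≤ g γ := by
    intro γ W hW
    have hswap : ∑ i : Fin n, ∑ j : Fin K, γ (i, j) * ∑ k : Fin d, W j k * y i k
        = ∑ p : Fin K × Fin d, W p.1 p.2 * A γ p.1 p.2 := by
      rw [Fintype.sum_prod_type, Finset.sum_comm]
      refine Finset.sum_congr rfl fun j _ => ?_
      simp only [hA, Finset.mul_sum]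
      rw [Finset.sum_comm]
      exact Finset.sum_congr rfl fun k _ =>
        Finset.sum_congr rfl fun i _ => by ring
    rw [hswap]
    have hCS := Finset.sum_mul_sq_le_sq_mul_sq Finset.univ
      (fun p : Fin K × Fin d => W p.1 p.2) (fun p => A γ p.1 p.2)
    have hb : ∑ p : Fin K × Fin d, W p.1 p.2 * A γ p.1 p.2
        ≤ Real.sqrt (∑ p : Fin K × Fin d, (W p.1 p.2) ^ 2)
          * Real.sqrt (∑ p : Fin K × Fin d, (A γ p.1 p.2) ^ 2) := by
      calc ∑ p : Fin K × Fin d, W p.1 p.2 * A γ p.1 p.2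
          ≤ |∑ p : Fin K × Fin d, W p.1 p.2 * A γ p.1 p.2| := le_abs_self _
        _ = Real.sqrt ((∑ p : Fin K × Fin d, W p.1 p.2 * A γ p.1 p.2) ^ 2) :=
            (Real.sqrt_sq_eq_abs _).symm
        _ ≤ Real.sqrt ((∑ p : Fin K × Fin d, (W p.1 p.2) ^ 2)
              * ∑ p : Fin K × Fin d, (A γ p.1 p.2) ^ 2) := Real.sqrt_le_sqrt hCS
        _ = _ := Real.sqrt_mul (Finset.sum_nonneg fun p _ => sq_nonneg _) _
    have hfrW : Real.sqrt (∑ p : Fin K × Fin d, (W p.1 p.2) ^ 2) = frob W := by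
      rw [frob, Fintype.sum_prod_type]
    have hgg : Real.sqrt (∑ p : Fin K × Fin d, (A γ p.1 p.2) ^ 2) = g γ := by
      rw [hg, hq, Fintype.sum_prod_type]
    rw [hfrW, hgg] at hb
    refine hb.trans ?_
    exact mul_le_of_le_one_left (hg0 γ) hW
  -- the zero matrix is admissible
  have hW0 : frob (0 : Matrix (Fin K) (Fin d) ℝ) ≤ 1 := by
    simp [frob]
  set W0 : {W : Matrix (Fin K) (Fin d) ℝ // frob W ≤ 1} := ⟨0, hW0⟩ with hW0'
  haveI : Nonempty {W : Matrix (Fin K) (Fin d) ℝ // frob W ≤ 1} := ⟨W0⟩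
  have hbdd : ∀ γ : Fin n × Fin K → ℝ, BddAbove (Set.range fun W : {W : Matrix (Fin K) (Fin d) ℝ // frob W ≤ 1} =>
      ∑ i : Fin n, ∑ j : Fin K, γ (i, j) * ∑ k : Fin d, W.1 j k * y i k) := by
    intro γ
    exact ⟨g γ, Set.forall_mem_range.2 fun W => key γ W.1 W.2⟩
  have hsup_le : ∀ γ : Fin n × Fin K → ℝ, (⨆ W : {W : Matrix (Fin K) (Fin d) ℝ // frob W ≤ 1},
      ∑ i : Fin n, ∑ j : Fin K, γ (i, j) * ∑ k : Fin d, W.1 j k * y i k) ≤ g γ := by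
    intro γ
    exact ciSup_le fun W => key γ W.1 W.2
  have hsup_nonneg : ∀ γ : Fin n × Fin K → ℝ, 0 ≤ (⨆ W : {W : Matrix (Fin K) (Fin d) ℝ // frob W ≤ 1},
      ∑ i : Fin n, ∑ j : Fin K, γ (i, j) * ∑ k : Fin d, W.1 j k * y i k) := by
    intro γ
    have h0 : (0:ℝ) = ∑ i : Fin n, ∑ j : Fin K, γ (i, j) * ∑ k : Fin d, W0.1 j k * y i k := by
      simp [hW0']
    rw [h0]
    exact le_ciSup (hbdd γ) W0
  -- expansion of squares of A into coordinate products
  have hA2 : ∀ (j : Fin K) (k : Fin d), (fun γ : Fin n × Fin K → ℝ => (A γ j k) ^ 2)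
      = fun γ => ∑ i : Fin n, ∑ i' : Fin n,
        (y i k * y i' k) * (γ (i, j) * γ (i', j)) := by
    intro j k
    funext γ
    rw [hA, sq, Finset.sum_mul_sum]
    exact Finset.sum_congr rfl fun i _ => Finset.sum_congr rfl fun i' _ => by ring
  have hA2int : ∀ (j : Fin K) (k : Fin d),
      Integrable (fun γ : Fin n × Fin K → ℝ => (A γ j k) ^ 2) P := by
    intro j k
    rw [hA2 j k, hP]
    exact integrable_finset_sum _ fun i _ => integrable_finset_sum _ fun i' _ =>
      ((pi_integrable_eval_mul (i, j) (i', j)).const_mul _)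
  have hqint : Integrable q P := by
    rw [hq]
    exact integrable_finset_sum _ fun j _ => integrable_finset_sum _ fun k _ => hA2int j k
  -- value of ∫ q
  have hA2val : ∀ (j : Fin K) (k : Fin d),
      ∫ γ, (A γ j k) ^ 2 ∂P = ∑ i : Fin n, (y i k) ^ 2 := by
    intro j k
    rw [hA2 j k, hP]
    rw [integral_finset_sum _ fun i _ => integrable_finset_sum _ fun i' _ =>
      ((pi_integrable_eval_mul (i, j) (i', j)).const_mul _)]
    rw [Finset.sum_congr rfl fun i _ => integral_finset_sum _ fun i' _ =>
      ((pi_integrable_eval_mul (i, j) (i', j)).const_mul _)]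
    refine Finset.sum_congr rfl fun i _ => ?_
    have : ∀ i' : Fin n, ∫ γ : Fin n × Fin K → ℝ,
        (y i k * y i' k) * (γ (i, j) * γ (i', j)) ∂(Measure.pi fun _ => gaussianReal 0 1)
        = (y i k * y i' k) * (if i = i' then 1 else 0) := by
      intro i'
      rw [integral_const_mul, pi_integral_eval_mul (i, j) (i', j)]
      congr 1
      simp [Prod.ext_iff]
    rw [Finset.sum_congr rfl fun i' _ => this i']
    simp [Finset.mul_sum, Finset.sum_ite_eq]
    ring
  have hqval : ∫ γ, q γ ∂P = K * ∑ i, ‖y i‖ ^ 2 := by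
    rw [hq, integral_finset_sum _ fun j _ => integrable_finset_sum _ fun k _ => hA2int j k]
    rw [Finset.sum_congr rfl fun j _ => integral_finset_sum _ fun k _ => hA2int j k]
    rw [Finset.sum_congr rfl fun j _ => Finset.sum_congr rfl fun k _ => hA2val j k]
    have hnorm : ∀ i : Fin n, ‖y i‖ ^ 2 = ∑ k : Fin d, (y i k) ^ 2 := by
      intro i
      rw [EuclideanSpace.norm_eq, Real.sq_sqrt (Finset.sum_nonneg fun k _ => sq_nonneg _)]
      exact Finset.sum_congr rfl fun k _ => by rw [Real.norm_eq_abs, sq_abs]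
    rw [Finset.sum_comm]
    simp only [hnorm]
    rw [← Finset.sum_comm]
    rw [Finset.sum_const, Finset.card_univ, Fintype.card_fin, nsmul_eq_mul]
    rw [Finset.sum_comm]
  -- measurability of g
  have hqmeas : Measurable q := by
    rw [hq]
    refine Finset.measurable_sum _ fun j _ => Finset.measurable_sum _ fun k _ => ?_
    refine (Finset.measurable_sum _ fun i _ => ?_).pow_const 2
    exact (measurable_pi_apply (i, j)).mul measurable_const
  have hgmeas : Measurable g := (Real.continuous_sqrt.measurable).comp hqmeas
  have hgsq : ∀ γ, g γ ^ 2 = q γ := fun γ => Real.sq_sqrt (hq0 γ)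
  have hgmem : MemLp g 2 P := by
    refine (memLp_two_iff_integrable_sq hgmeas.aestronglyMeasurable).2 ?_
    exact hqint.congr (Filter.Eventually.of_forall fun γ => (hgsq γ).symm)
  have hgint : Integrable g P := hgmem.integrable (by norm_num)
  -- Jensen step
  have hjensen : ∫ γ, g γ ∂P ≤ Real.sqrt (∫ γ, q γ ∂P) := by
    have hvar := variance_nonneg g P
    rw [variance_eq_sub hgmem] at hvar
    have h2 : (∫ γ, g γ ∂P) ^ 2 ≤ ∫ γ, g γ ^ 2 ∂P := by
      simpa [sub_nonneg] using hvar
    have h3 : ∫ γ, g γ ^ 2 ∂P = ∫ γ, q γ ∂P :=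
      integral_congr_ae (Filter.Eventually.of_forall fun γ => hgsq γ)
    calc ∫ γ, g γ ∂P = Real.sqrt ((∫ γ, g γ ∂P) ^ 2) :=
          (Real.sqrt_sq (integral_nonneg hg0)).symm
      _ ≤ Real.sqrt (∫ γ, q γ ∂P) := Real.sqrt_le_sqrt (h3 ▸ h2)
  -- conclude
  calc (∫ γ : Fin n × Fin K → ℝ,
        (⨆ W : {W : Matrix (Fin K) (Fin d) ℝ // frob W ≤ 1},
          ∑ i : Fin n, ∑ j : Fin K, γ (i, j) * ∑ k : Fin d, W.1 j k * y i k) ∂P)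
      ≤ ∫ γ, g γ ∂P := by
        refine integral_mono_of_nonneg (Filter.Eventually.of_forall hsup_nonneg) hgint
          (Filter.Eventually.of_forall hsup_le)
    _ ≤ Real.sqrt (∫ γ, q γ ∂P) := hjensen
    _ = Real.sqrt (K * ∑ i, ‖y i‖ ^ 2) := by rw [hqval]
    _ = Real.sqrt K * Real.sqrt (∑ i, ‖y i‖ ^ 2) := Real.sqrt_mul (Nat.cast_nonneg K) _
end
end

section
/- Let ℓ(v,α,β,a) = K·softmax(v)_a·α − β. Then for all v₁, v₂ ∈ ℝ^K, all α₁, α₂, β₁, β₂ ∈ [−1,1] and all a ∈ {1,…,K}: (ℓ(v₁,α₁,β₁,a) − ℓ(v₂,α₂,β₂,a))² ≤ 12K²·‖v₁−v₂‖² + 3K²·(α₁−α₂)² + 3·(β₁−β₂)², where ‖·‖ is the Euclidean norm on ℝ^K. -/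
noncomputable section

/-- softmax on `ℝ^K`. -/
def softmax {K : ℕ} (v : Fin K → ℝ) (a : Fin K) : ℝ :=
  Real.exp (v a) / ∑ j, Real.exp (v j)

/-- The loss `ℓ(v,α,β,a) = K·softmax(v)_a·α − β`. -/
def ellK (K : ℕ) (v : Fin K → ℝ) (α β : ℝ) (a : Fin K) : ℝ :=
  (K : ℝ) * softmax v a * α - β

lemma softmax_nonneg {K : ℕ} (hK : 1 ≤ K) (v : Fin K → ℝ) (a : Fin K) :
    0 ≤ softmax v a := by
  have hD : 0 < ∑ j, Real.exp (v j) :=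
    Finset.sum_pos (fun j _ => Real.exp_pos _) ⟨a, Finset.mem_univ a⟩
  exact div_nonneg (Real.exp_pos _).le hD.le

lemma softmax_le_one {K : ℕ} (hK : 1 ≤ K) (v : Fin K → ℝ) (a : Fin K) :
    softmax v a ≤ 1 := by
  have hD : 0 < ∑ j, Real.exp (v j) :=
    Finset.sum_pos (fun j _ => Real.exp_pos _) ⟨a, Finset.mem_univ a⟩
  rw [softmax, div_le_one hD]
  exact Finset.single_le_sum (fun j _ => (Real.exp_pos _).le) (Finset.mem_univ a)

lemma coord_le_norm {K : ℕ} (v : EuclideanSpace ℝ (Fin K)) (j : Fin K) :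
    |v j| ≤ ‖v‖ := by
  rw [EuclideanSpace.norm_eq, ← Real.sqrt_sq_eq_abs]
  apply Real.sqrt_le_sqrt
  have := Finset.single_le_sum (f := fun i => ‖v i‖ ^ 2)
    (fun i _ => sq_nonneg _) (Finset.mem_univ j)
  simpa [Real.norm_eq_abs, sq_abs] using this

/-- softmax is 2-Lipschitz. -/
lemma softmax_lip {K : ℕ} (hK : 1 ≤ K) (a : Fin K) (v w : EuclideanSpace ℝ (Fin K)) :
    |softmax w a - softmax v a| ≤ 2 * ‖w - v‖ := by
  set u : EuclideanSpace ℝ (Fin K) := w - v with hu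
  set f : ℝ → ℝ := fun t => softmax (fun j => v j + t * u j) a with hf
  set f' : ℝ → ℝ := fun t =>
    softmax (fun j => v j + t * u j) a *
      (u a - ∑ j, softmax (fun j => v j + t * u j) j * u j) with hf'
  have hderiv : ∀ t : ℝ, HasDerivAt f (f' t) t := by
    intro t
    have hD : 0 < ∑ j, Real.exp (v j + t * u j) :=
      Finset.sum_pos (fun j _ => Real.exp_pos _) ⟨a, Finset.mem_univ a⟩
    have hN : ∀ j : Fin K, HasDerivAt (fun s : ℝ => Real.exp (v j + s * u j))
        (u j * Real.exp (v j + t * u j)) t := by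
      intro j
      have h1 : HasDerivAt (fun s : ℝ => v j + s * u j) (u j) t := by
        simpa using ((hasDerivAt_id t).mul_const (u j)).const_add (v j)
      rw [mul_comm]; exact h1.exp
    have hDsum : HasDerivAt (fun s : ℝ => ∑ j, Real.exp (v j + s * u j))
        (∑ j, u j * Real.exp (v j + t * u j)) t :=
      HasDerivAt.fun_sum (fun j _ => hN j)
    have hdiv := (hN a).div hDsum hD.ne'
    refine (hdiv.congr_deriv ?_ :); symm
    have key : ∀ b : Fin K, softmax (fun j => v j + t * u j) b
        = Real.exp (v b + t * u b) / ∑ j, Real.exp (v j + t * u j) := fun b => rfl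
    simp only [hf', key]
    set D := ∑ j, Real.exp (v j + t * u j) with hDdef
    set S := ∑ j, Real.exp (v j + t * u j) * u j with hSdef
    have h1 : ∑ x, Real.exp (v x + t * u x) / D * u x = S / D := by
      rw [hSdef, Finset.sum_div]
      exact Finset.sum_congr rfl (fun x _ => by ring)
    have h2 : ∑ x, u x * Real.exp (v x + t * u x) = S := by
      rw [hSdef]
      exact Finset.sum_congr rfl (fun x _ => by ring)
    rw [h1, h2]
    field_simp
  have hbound : ∀ t : ℝ, |f' t| ≤ 2 * ‖u‖ := by
    intro t
    have hs0 := softmax_nonneg hK (fun j => v j + t * u j)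
    have hs1 := softmax_le_one hK (fun j => v j + t * u j)
    have hsum1 : ∑ j, softmax (fun j => v j + t * u j) j = 1 := by
      have hD : 0 < ∑ j, Real.exp (v j + t * u j) :=
        Finset.sum_pos (fun j _ => Real.exp_pos _) ⟨a, Finset.mem_univ a⟩
      simp only [softmax, ← Finset.sum_div]
      exact div_self hD.ne'
    have h2 : |∑ j, softmax (fun j => v j + t * u j) j * u j| ≤ ‖u‖ := by
      calc |∑ j, softmax (fun j => v j + t * u j) j * u j|
          ≤ ∑ j, |softmax (fun j => v j + t * u j) j * u j| := Finset.abs_sum_le_sum_abs _ _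
        _ ≤ ∑ j, softmax (fun j => v j + t * u j) j * ‖u‖ := by
            apply Finset.sum_le_sum
            intro j _
            rw [abs_mul, abs_of_nonneg (hs0 j)]
            exact mul_le_mul_of_nonneg_left (coord_le_norm u j) (hs0 j)
        _ = ‖u‖ := by rw [← Finset.sum_mul, hsum1, one_mul]
    have hua : |u a| ≤ ‖u‖ := coord_le_norm u a
    calc |f' t| = |softmax (fun j => v j + t * u j) a|
          * |u a - ∑ j, softmax (fun j => v j + t * u j) j * u j| := abs_mul _ _
      _ ≤ 1 * (|u a| + |∑ j, softmax (fun j => v j + t * u j) j * u j|) := by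
          apply mul_le_mul
          · rw [abs_of_nonneg (hs0 a)]; exact hs1 a
          · exact abs_sub _ _
          · exact abs_nonneg _
          · exact zero_le_one
      _ ≤ 2 * ‖u‖ := by rw [one_mul]; linarith
  have hmain : ‖f 1 - f 0‖ ≤ 2 * ‖u‖ := by
    apply norm_image_sub_le_of_norm_deriv_le_segment_01' (f' := f')
    · exact fun x _ => (hderiv x).hasDerivWithinAt
    · exact fun x _ => hbound x
  have hf1 : f 1 = softmax w a := by
    simp only [hf]
    congr 1
    funext j
    simp [hu]
  have hf0 : f 0 = softmax v a := by
    simp only [hf]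
    congr 1
    funext j
    simp
  rw [hf1, hf0] at hmain
  simpa [Real.norm_eq_abs] using hmain

/-- For all `v₁, v₂ ∈ ℝ^K`, `α₁, α₂, β₁, β₂ ∈ [−1,1]` and `a ∈ [K]`:
`(ℓ(v₁,α₁,β₁,a) − ℓ(v₂,α₂,β₂,a))² ≤ 12K²‖v₁−v₂‖² + 3K²(α₁−α₂)² + 3(β₁−β₂)²`. -/
theorem stmt_15 (K : ℕ) (hK : 1 ≤ K) (a : Fin K)
    (v₁ v₂ : EuclideanSpace ℝ (Fin K)) (α₁ α₂ β₁ β₂ : ℝ)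
    (hα₁ : α₁ ∈ Set.Icc (-1 : ℝ) 1) (hα₂ : α₂ ∈ Set.Icc (-1 : ℝ) 1)
    (hβ₁ : β₁ ∈ Set.Icc (-1 : ℝ) 1) (hβ₂ : β₂ ∈ Set.Icc (-1 : ℝ) 1) :
    (ellK K v₁ α₁ β₁ a - ellK K v₂ α₂ β₂ a) ^ 2 ≤
      12 * (K : ℝ) ^ 2 * ‖v₁ - v₂‖ ^ 2 + 3 * (K : ℝ) ^ 2 * (α₁ - α₂) ^ 2
        + 3 * (β₁ - β₂) ^ 2 := by
  obtain ⟨ha1, ha1'⟩ := hα₁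
  obtain ⟨ha2, ha2'⟩ := hα₂
  set s₁ := softmax v₁ a
  set s₂ := softmax v₂ a
  have hs10 : 0 ≤ s₁ := softmax_nonneg hK v₁ a
  have hs11 : s₁ ≤ 1 := softmax_le_one hK v₁ a
  have hs20 : 0 ≤ s₂ := softmax_nonneg hK v₂ a
  have hs21 : s₂ ≤ 1 := softmax_le_one hK v₂ a
  have hlip : |s₁ - s₂| ≤ 2 * ‖v₁ - v₂‖ := softmax_lip hK a v₂ v₁
  have hlip2 : (s₁ - s₂) ^ 2 ≤ 4 * ‖v₁ - v₂‖ ^ 2 := by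
    have := abs_nonneg (s₁ - s₂)
    nlinarith [sq_abs (s₁ - s₂)]
  have hKpos : (0 : ℝ) ≤ (K : ℝ) ^ 2 := by positivity
  have hn : (0 : ℝ) ≤ ‖v₁ - v₂‖ ^ 2 := by positivity
  have hα1sq : α₁ ^ 2 ≤ 1 := by nlinarith
  have hs2sq : s₂ ^ 2 ≤ 1 := by nlinarith
  have hX : ((K:ℝ)*(s₁-s₂)*α₁) ^ 2 ≤ 4 * (K:ℝ) ^ 2 * ‖v₁ - v₂‖ ^ 2 := by
    nlinarith [mul_le_mul_of_nonneg_left hlip2 hKpos,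
      mul_nonneg hKpos (sq_nonneg (s₁ - s₂))]
  have hY : ((K:ℝ)*s₂*(α₁-α₂)) ^ 2 ≤ (K:ℝ) ^ 2 * (α₁ - α₂) ^ 2 := by
    nlinarith [mul_nonneg hKpos (sq_nonneg (α₁ - α₂))]
  have hid : ellK K v₁ α₁ β₁ a - ellK K v₂ α₂ β₂ a
      = (K:ℝ)*(s₁-s₂)*α₁ + (K:ℝ)*s₂*(α₁-α₂) - (β₁-β₂) := by
    simp only [ellK]; ring
  rw [hid]
  nlinarith [hX, hY, sq_nonneg ((K:ℝ)*(s₁-s₂)*α₁ - (K:ℝ)*s₂*(α₁-α₂)),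
    sq_nonneg ((K:ℝ)*(s₁-s₂)*α₁ + (β₁-β₂)),
    sq_nonneg ((K:ℝ)*s₂*(α₁-α₂) + (β₁-β₂))]
end
end
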